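/- arXiv:1210.1116 — 7 statements merged into one kernel-verified Lean document; each statement's English description precedes it below -/
import Mathlib

section
/- Let P and P̃ be skip-free stochastic matrices on E_k = {0,...,k} such that p̃_{i,·} ⪯_st p_{i,·} for every i = 0,...,k-1, and let π, π̃ be initial probability vectors on E_k with π̃ ⪯_st π. Then for every level h = 1,...,k one has T_h ⪯_st T̃_h, i.e. for every n ∈ ℕ, ∑_{0≤i,j≤h-1} π_i (Q_h^n)_{i,j} ≤ ∑_{0≤i,j≤h-1} π̃_i (Q̃_h^n)_{i,j}, where Q_h, Q̃_h are the submatrices of P, P̃ on the states {0,...,h-1}. -/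
open Finset Matrix

/-- Usual stochastic order between two vectors on `Fin m`. -/
def stDom {m : ℕ} (μ ν : Fin m → ℝ) : Prop :=
  ∀ j : Fin m, ∑ l ∈ Finset.univ.filter (fun l => j ≤ l), μ l ≤
    ∑ l ∈ Finset.univ.filter (fun l => j ≤ l), ν l

/-- A (row-)stochastic matrix. -/
def IsStochastic {m : ℕ} (P : Matrix (Fin m) (Fin m) ℝ) : Prop :=
  (∀ i j, 0 ≤ P i j) ∧ ∀ i, ∑ j, P i j = 1

/-- A probability vector. -/
def IsProbVec {m : ℕ} (π : Fin m → ℝ) : Prop :=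
  (∀ i, 0 ≤ π i) ∧ ∑ i, π i = 1

/-- Skip-free (on the right): `p_{i,j} = 0` whenever `j > i+1`. -/
def SkipFree {m : ℕ} (P : Matrix (Fin m) (Fin m) ℝ) : Prop :=
  ∀ i j : Fin m, (i : ℕ) + 1 < (j : ℕ) → P i j = 0

/-- The survival function `P(T_h > n) = ∑_{0 ≤ i,j ≤ h-1} π_i (Q_h^n)_{i,j}`,
where `Q_h` is the leading `h × h` submatrix of `P`. -/
noncomputable def hitSurvival {k : ℕ} (P : Matrix (Fin (k + 1)) (Fin (k + 1)) ℝ)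
    (π : Fin (k + 1) → ℝ) (h : ℕ) (hh : h ≤ k) (n : ℕ) : ℝ :=
  ∑ i : Fin h, ∑ j : Fin h,
    π (Fin.castLE (hh.trans k.le_succ) i) *
      ((P.submatrix (Fin.castLE (hh.trans k.le_succ)) (Fin.castLE (hh.trans k.le_succ))) ^ n) i j

/-- partial ("cdf") sum below a Fin index, expressed via total minus tail. -/
lemma cdf_eq {m : ℕ} (ρ : Fin m → ℝ) (j : Fin m) :
    ∑ l ∈ Finset.range (j : ℕ), (if hl : l < m then ρ ⟨l, hl⟩ else 0)
      = ∑ l, ρ l - ∑ l ∈ Finset.univ.filter (fun l => j ≤ l), ρ l := by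
  have h1 : ∑ l, ρ l = ∑ l ∈ Finset.univ.filter (fun l => j ≤ l), ρ l
      + ∑ l ∈ Finset.univ.filter (fun l => ¬ j ≤ l), ρ l :=
    (Finset.sum_filter_add_sum_filter_not _ _ _).symm
  have h2 : ∑ l ∈ Finset.univ.filter (fun l => ¬ j ≤ l), ρ l
      = ∑ l ∈ Finset.range (j : ℕ), (if hl : l < m then ρ ⟨l, hl⟩ else 0) := by
    rw [Finset.sum_filter]
    have e1 : ∑ l : Fin m, (if ¬ j ≤ l then ρ l else 0)
        = ∑ l ∈ Finset.range m,
            (if hl : l < m then (if (l : ℕ) < (j : ℕ) then ρ ⟨l, hl⟩ else 0) else 0) := by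
      rw [← Fin.sum_univ_eq_sum_range]
      refine Finset.sum_congr rfl fun l _ => ?_
      rw [dif_pos l.isLt, Fin.eta]
      exact if_congr (by rw [Fin.not_le, Fin.lt_def]) rfl rfl
    rw [e1]
    rw [← Finset.sum_subset (Finset.range_subset_range.2 j.isLt.le)]
    · refine Finset.sum_congr rfl fun l hl => ?_
      rw [Finset.mem_range] at hl
      rw [dif_pos (hl.trans j.isLt), if_pos hl, dif_pos (hl.trans j.isLt)]
    · intro l _ hl
      rw [Finset.mem_range] at hl
      push_neg at hl
      split
      · rw [if_neg (by omega)]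
      · rfl
  linarith [h1, h2]

/-- If `μ ⪯_st ν`, totals agree, and `G` is antitone, then `∑ ν G ≤ ∑ μ G`. -/
lemma tool {m : ℕ} (μ ν G : Fin m → ℝ)
    (hdom : stDom μ ν) (htot : ∑ i, μ i = ∑ i, ν i)
    (hG : Antitone G) :
    ∑ j, ν j * G j ≤ ∑ j, μ j * G j := by
  rcases Nat.eq_zero_or_pos m with hm | hm
  · subst hm; simp
  set μ' : ℕ → ℝ := fun l => if hl : l < m then μ ⟨l, hl⟩ else 0 with hμ'
  set ν' : ℕ → ℝ := fun l => if hl : l < m then ν ⟨l, hl⟩ else 0 with hν'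
  set G' : ℕ → ℝ := fun l => if hl : l < m then G ⟨l, hl⟩ else 0 with hG'
  have convert_sum : ∀ ρ : Fin m → ℝ, ∀ ρ' : ℕ → ℝ,
      (ρ' = fun l => if hl : l < m then ρ ⟨l, hl⟩ else 0) →
      ∑ j, ρ j * G j = ∑ l ∈ Finset.range m, G' l • ρ' l := by
    intro ρ ρ' hρ'
    rw [← Fin.sum_univ_eq_sum_range (fun l => G' l • ρ' l) m]
    refine Finset.sum_congr rfl fun l _ => ?_
    rw [hρ', hG']
    simp only [dif_pos l.isLt, smul_eq_mul, Fin.eta]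
    ring
  rw [convert_sum μ μ' hμ', convert_sum ν ν' hν']
  rw [Finset.sum_range_by_parts G' μ' m, Finset.sum_range_by_parts G' ν' m]
  have htot' : ∑ i ∈ Finset.range m, μ' i = ∑ i ∈ Finset.range m, ν' i := by
    rw [← Fin.sum_univ_eq_sum_range μ' m, ← Fin.sum_univ_eq_sum_range ν' m]
    rw [show (∑ i : Fin m, μ' i) = ∑ i : Fin m, μ i from
      Finset.sum_congr rfl fun i _ => by rw [hμ']; simp [Fin.eta]]
    rw [show (∑ i : Fin m, ν' i) = ∑ i : Fin m, ν i from
      Finset.sum_congr rfl fun i _ => by rw [hν']; simp [Fin.eta]]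
    exact htot
  rw [htot']
  rw [sub_le_sub_iff_left]
  refine Finset.sum_le_sum fun i hi => ?_
  rw [Finset.mem_range] at hi
  have hi1 : i + 1 < m := by omega
  have hcoef : G' (i + 1) - G' i ≤ 0 := by
    rw [hG']
    simp only [dif_pos hi1, dif_pos (by omega : i < m)]
    have := hG (show (⟨i, by omega⟩ : Fin m) ≤ ⟨i + 1, hi1⟩ from by
      simp [Fin.le_def])
    linarith
  have hcdf : ∑ j ∈ Finset.range (i + 1), ν' j ≤ ∑ j ∈ Finset.range (i + 1), μ' j := by
    have hν := cdf_eq ν ⟨i + 1, hi1⟩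
    have hμ := cdf_eq μ ⟨i + 1, hi1⟩
    simp only [hν', hμ']
    rw [show ((⟨i+1, hi1⟩ : Fin m) : ℕ) = i + 1 from rfl] at hν hμ
    rw [hν, hμ, htot]
    have := hdom ⟨i + 1, hi1⟩
    linarith
  simp only [smul_eq_mul]
  nlinarith [hcoef, hcdf]

/-- `P_i(T_h > n)`: survival probability starting from `i < h`. -/
noncomputable def phi {k : ℕ} (P : Matrix (Fin (k + 1)) (Fin (k + 1)) ℝ)
    (h : ℕ) (hh : h ≤ k) (n : ℕ) (i : Fin h) : ℝ :=
  ∑ j : Fin h,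
    ((P.submatrix (Fin.castLE (hh.trans k.le_succ)) (Fin.castLE (hh.trans k.le_succ))) ^ n) i j

lemma pow_entry_nonneg {m : ℕ} (Q : Matrix (Fin m) (Fin m) ℝ)
    (hQ : ∀ i j, 0 ≤ Q i j) (n : ℕ) : ∀ i j, 0 ≤ (Q ^ n) i j := by
  induction n with
  | zero => intro i j; rw [pow_zero, Matrix.one_apply]; split <;> norm_num
  | succ n ih =>
    intro i j
    rw [pow_succ, Matrix.mul_apply]
    exact Finset.sum_nonneg fun l _ => mul_nonneg (ih i l) (hQ l j)

lemma phi_nonneg {k : ℕ} (P : Matrix (Fin (k + 1)) (Fin (k + 1)) ℝ)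
    (hP : ∀ i j, 0 ≤ P i j) (h : ℕ) (hh : h ≤ k) (n : ℕ) (i : Fin h) :
    0 ≤ phi P h hh n i :=
  Finset.sum_nonneg fun j _ =>
    pow_entry_nonneg _ (fun a b => hP _ _) n i j

lemma phi_zero {k : ℕ} (P : Matrix (Fin (k + 1)) (Fin (k + 1)) ℝ)
    (h : ℕ) (hh : h ≤ k) (i : Fin h) : phi P h hh 0 i = 1 := by
  simp [phi, Matrix.one_apply]

lemma phi_succ {k : ℕ} (P : Matrix (Fin (k + 1)) (Fin (k + 1)) ℝ)
    (h : ℕ) (hh : h ≤ k) (n : ℕ) (i : Fin h) :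
    phi P h hh (n + 1) i =
      ∑ j : Fin h,
        P (Fin.castLE (hh.trans k.le_succ) i) (Fin.castLE (hh.trans k.le_succ) j) *
          phi P h hh n j := by
  unfold phi
  simp only [pow_succ', Matrix.mul_apply, Matrix.submatrix_apply]
  rw [Finset.sum_comm]
  refine Finset.sum_congr rfl fun j _ => ?_
  rw [Finset.mul_sum]

/-- Reindexing: a sum over `Fin (k+1)` of a function vanishing above `h` equals
the sum over `Fin h`. -/
lemma sum_extend {k h : ℕ} (hh : h ≤ k) (F : Fin (k + 1) → ℝ)
    (hF : ∀ j : Fin (k + 1), h ≤ (j : ℕ) → F j = 0) :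
    ∑ j : Fin (k + 1), F j = ∑ j : Fin h, F (Fin.castLE (hh.trans k.le_succ) j) := by
  set F' : ℕ → ℝ := fun l => if hl : l < k + 1 then F ⟨l, hl⟩ else 0 with hF'
  have e1 : ∑ j : Fin (k + 1), F j = ∑ l ∈ Finset.range (k + 1), F' l := by
    rw [← Fin.sum_univ_eq_sum_range F' (k + 1)]
    exact Finset.sum_congr rfl fun j _ => by
      rw [hF']; simp [Fin.eta]; intro hk; exact absurd j.isLt (by omega)
  have e2 : ∑ j : Fin h, F (Fin.castLE (hh.trans k.le_succ) j)
      = ∑ l ∈ Finset.range h, F' l := by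
    rw [← Fin.sum_univ_eq_sum_range F' h]
    refine Finset.sum_congr rfl fun j _ => ?_
    simp only [hF']
    rw [dif_pos (by omega : (j : ℕ) < k + 1)]
    rfl
  rw [e1, e2]
  rw [← Finset.sum_subset (Finset.range_subset_range.2 (by omega : h ≤ k + 1))]
  intro l hl1 hl2
  rw [Finset.mem_range] at hl1 hl2
  simp only [hF']
  rw [dif_pos hl1]
  exact hF ⟨l, hl1⟩ (Nat.le_of_not_lt hl2)

lemma rowsum_le {k : ℕ} (P : Matrix (Fin (k + 1)) (Fin (k + 1)) ℝ)
    (hP : IsStochastic P) (h : ℕ) (hh : h ≤ k) (i : Fin h) :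
    ∑ j : Fin h, P (Fin.castLE (hh.trans k.le_succ) i) (Fin.castLE (hh.trans k.le_succ) j)
      ≤ 1 := by
  set e := Fin.castLE (hh.trans k.le_succ)
  set F' : ℕ → ℝ := fun l => if hl : l < k + 1 then P (e i) ⟨l, hl⟩ else 0 with hF'
  have e2 : ∑ j : Fin h, P (e i) (e j) = ∑ l ∈ Finset.range h, F' l := by
    rw [← Fin.sum_univ_eq_sum_range F' h]
    refine Finset.sum_congr rfl fun j _ => ?_
    simp only [hF']
    rw [dif_pos (by omega : (j : ℕ) < k + 1)]
    rfl
  have e1 : ∑ l ∈ Finset.range (k + 1), F' l = 1 := by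
    rw [← Fin.sum_univ_eq_sum_range F' (k + 1)]
    rw [show (∑ j : Fin (k+1), F' j) = ∑ j : Fin (k+1), P (e i) j from
      Finset.sum_congr rfl fun j _ => by
        rw [hF']; simp [Fin.eta]; intro hk; exact absurd j.isLt (by omega)]
    exact hP.2 _
  rw [e2, ← e1]
  refine Finset.sum_le_sum_of_subset_of_nonneg (Finset.range_subset_range.2 (by omega)) ?_
  intro l _ _
  simp only [hF']
  split
  · exact hP.1 _ _
  · exact le_refl 0

lemma rowsum_eq {k : ℕ} (P : Matrix (Fin (k + 1)) (Fin (k + 1)) ℝ)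
    (hP : IsStochastic P) (hsf : SkipFree P) (h : ℕ) (hh : h ≤ k) (i : Fin h)
    (hi : (i : ℕ) + 1 < h) :
    ∑ j : Fin h, P (Fin.castLE (hh.trans k.le_succ) i) (Fin.castLE (hh.trans k.le_succ) j)
      = 1 := by
  rw [← sum_extend hh (P (Fin.castLE (hh.trans k.le_succ) i))
    (fun j hj => hsf _ j (by simpa using by omega))]
  exact hP.2 _

lemma phi_decreasing {k : ℕ} (P : Matrix (Fin (k + 1)) (Fin (k + 1)) ℝ)
    (hP : IsStochastic P) (h : ℕ) (hh : h ≤ k) (n : ℕ) (i : Fin h) :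
    phi P h hh (n + 1) i ≤ phi P h hh n i := by
  induction n generalizing i with
  | zero =>
    rw [phi_succ, phi_zero]
    calc ∑ j : Fin h, P _ (Fin.castLE (hh.trans k.le_succ) j) * phi P h hh 0 j
        = ∑ j : Fin h, P (Fin.castLE (hh.trans k.le_succ) i)
            (Fin.castLE (hh.trans k.le_succ) j) := by
          refine Finset.sum_congr rfl fun j _ => ?_
          rw [phi_zero, mul_one]
      _ ≤ 1 := rowsum_le P hP h hh i
  | succ n ih =>
    rw [phi_succ, phi_succ]
    refine Finset.sum_le_sum fun j _ => ?_
    exact mul_le_mul_of_nonneg_left (ih j) (hP.1 _ _)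

lemma phi_antitone {k : ℕ} (P : Matrix (Fin (k + 1)) (Fin (k + 1)) ℝ)
    (hP : IsStochastic P) (hsf : SkipFree P) (h : ℕ) (hh : h ≤ k) (n : ℕ) :
    ∀ i j : Fin h, i ≤ j → phi P h hh n j ≤ phi P h hh n i := by
  induction n with
  | zero => intro i j _; rw [phi_zero, phi_zero]
  | succ n ih =>
    -- adjacent step
    have adj : ∀ (a : ℕ) (ha : a + 1 < h),
        phi P h hh (n + 1) ⟨a + 1, ha⟩ ≤ phi P h hh (n + 1) ⟨a, by omega⟩ := by
      intro a ha
      have step1 : phi P h hh n ⟨a + 1, ha⟩ ≤ phi P h hh (n + 1) ⟨a, by omega⟩ := by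
        rw [phi_succ]
        have e1 : ∑ j : Fin h,
            P (Fin.castLE (hh.trans k.le_succ) ⟨a, by omega⟩)
              (Fin.castLE (hh.trans k.le_succ) j) * phi P h hh n ⟨a + 1, ha⟩
            ≤ ∑ j : Fin h,
            P (Fin.castLE (hh.trans k.le_succ) ⟨a, by omega⟩)
              (Fin.castLE (hh.trans k.le_succ) j) * phi P h hh n j := by
          refine Finset.sum_le_sum fun j _ => ?_
          by_cases hj : (j : ℕ) ≤ a + 1
          · exact mul_le_mul_of_nonneg_left
              (ih j ⟨a + 1, ha⟩ (by simpa [Fin.le_def] using hj)) (hP.1 _ _)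
          · have : P (Fin.castLE (hh.trans k.le_succ) ⟨a, by omega⟩)
                (Fin.castLE (hh.trans k.le_succ) j) = 0 :=
              hsf _ _ (by simpa using by omega)
            rw [this, zero_mul, zero_mul]
        have e2 : ∑ j : Fin h,
            P (Fin.castLE (hh.trans k.le_succ) ⟨a, by omega⟩)
              (Fin.castLE (hh.trans k.le_succ) j) * phi P h hh n ⟨a + 1, ha⟩
            = phi P h hh n ⟨a + 1, ha⟩ := by
          rw [← Finset.sum_mul, rowsum_eq P hP hsf h hh ⟨a, by omega⟩ (by simpa using ha),
            one_mul]
        linarith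
      calc phi P h hh (n + 1) ⟨a + 1, ha⟩ ≤ phi P h hh n ⟨a + 1, ha⟩ :=
            phi_decreasing P hP h hh n _
        _ ≤ phi P h hh (n + 1) ⟨a, by omega⟩ := step1
    -- general step via gap induction
    have gap : ∀ (d a : ℕ) (hd : a + d < h),
        phi P h hh (n + 1) ⟨a + d, hd⟩ ≤ phi P h hh (n + 1) ⟨a, by omega⟩ := by
      intro d
      induction d with
      | zero => intro a hd; exact le_of_eq (by congr 1)
      | succ d ihd =>
        intro a hd
        have h1 : phi P h hh (n + 1) ⟨a + (d + 1), hd⟩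
            ≤ phi P h hh (n + 1) ⟨a + d, by omega⟩ := by
          have := adj (a + d) (by omega)
          convert this using 3 <;> omega
        exact h1.trans (ihd a (by omega))
    intro i j hij
    have : j = ⟨(i : ℕ) + ((j : ℕ) - (i : ℕ)), by omega⟩ := by
      apply Fin.ext; simp; omega
    rw [this]
    have h2 := gap ((j : ℕ) - (i : ℕ)) (i : ℕ) (by omega)
    simpa using h2

lemma G_antitone {k : ℕ} (Pt : Matrix (Fin (k + 1)) (Fin (k + 1)) ℝ)
    (hPt : IsStochastic Pt) (hsfPt : SkipFree Pt) (h : ℕ) (hh : h ≤ k) (n : ℕ) :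
    Antitone (fun j : Fin (k + 1) =>
      if hj : (j : ℕ) < h then phi Pt h hh n ⟨(j : ℕ), hj⟩ else 0) := by
  intro a b hab
  simp only
  by_cases hb : (b : ℕ) < h
  · have ha : (a : ℕ) < h := lt_of_le_of_lt (Fin.le_def.1 hab) hb
    rw [dif_pos ha, dif_pos hb]
    exact phi_antitone Pt hPt hsfPt h hh n ⟨(a : ℕ), ha⟩ ⟨(b : ℕ), hb⟩
      (Fin.mk_le_mk.2 (Fin.le_def.1 hab))
  · rw [dif_neg hb]
    by_cases ha : (a : ℕ) < h
    · rw [dif_pos ha]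
      exact phi_nonneg Pt hPt.1 h hh n _
    · rw [dif_neg ha]

/-- Reindexing a `Fin h` sum against `phi` into a full `Fin (k+1)` sum against the
extension `G`. -/
lemma sum_G_eq {k : ℕ} (Pt : Matrix (Fin (k + 1)) (Fin (k + 1)) ℝ)
    (h : ℕ) (hh : h ≤ k) (n : ℕ) (w : Fin (k + 1) → ℝ) :
    ∑ j : Fin (k + 1), w j *
        (if hj : (j : ℕ) < h then phi Pt h hh n ⟨(j : ℕ), hj⟩ else 0)
      = ∑ j : Fin h, w (Fin.castLE (hh.trans k.le_succ) j) * phi Pt h hh n j := by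
  rw [sum_extend hh (fun j => w j *
      (if hj : (j : ℕ) < h then phi Pt h hh n ⟨(j : ℕ), hj⟩ else 0))
    (fun j hj => by beta_reduce; rw [dif_neg (not_lt.2 hj), mul_zero])]
  refine Finset.sum_congr rfl fun j _ => ?_
  have hj : ((Fin.castLE (hh.trans k.le_succ) j : Fin (k + 1)) : ℕ) < h := j.isLt
  have hfin : (⟨((Fin.castLE (hh.trans k.le_succ) j : Fin (k + 1)) : ℕ), hj⟩ : Fin h) = j :=
    Fin.ext rfl
  rw [dif_pos hj, hfin]

lemma phi_cross {k : ℕ} (P Pt : Matrix (Fin (k + 1)) (Fin (k + 1)) ℝ)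
    (hP : IsStochastic P) (hPt : IsStochastic Pt) (hsfPt : SkipFree Pt)
    (hrow : ∀ i : Fin (k + 1), (i : ℕ) < k → stDom (Pt i) (P i))
    (h : ℕ) (hh : h ≤ k) (n : ℕ) (i : Fin h) :
    phi P h hh n i ≤ phi Pt h hh n i := by
  induction n generalizing i with
  | zero => rw [phi_zero, phi_zero]
  | succ n ih =>
    set e := Fin.castLE (hh.trans k.le_succ) with he
    have step1 : phi P h hh (n + 1) i ≤ ∑ j : Fin h, P (e i) (e j) * phi Pt h hh n j := by
      rw [phi_succ]
      exact Finset.sum_le_sum fun j _ => mul_le_mul_of_nonneg_left (ih j) (hP.1 _ _)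
    have step2 : ∑ j : Fin h, P (e i) (e j) * phi Pt h hh n j
        ≤ ∑ j : Fin h, Pt (e i) (e j) * phi Pt h hh n j := by
      rw [← sum_G_eq Pt h hh n (P (e i)), ← sum_G_eq Pt h hh n (Pt (e i))]
      refine tool (Pt (e i)) (P (e i)) _
        (hrow (e i) (lt_of_lt_of_le i.isLt hh)) (by rw [hPt.2, hP.2])
        (G_antitone Pt hPt hsfPt h hh n)
    rw [phi_succ Pt]
    exact step1.trans step2

lemma hitSurvival_eq {k : ℕ} (P : Matrix (Fin (k + 1)) (Fin (k + 1)) ℝ)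
    (π : Fin (k + 1) → ℝ) (h : ℕ) (hh : h ≤ k) (n : ℕ) :
    hitSurvival P π h hh n
      = ∑ i : Fin h, π (Fin.castLE (hh.trans k.le_succ) i) * phi P h hh n i := by
  unfold hitSurvival phi
  refine Finset.sum_congr rfl fun i _ => ?_
  rw [Finset.mul_sum]

/-- Theorem (Irle–Gani type): if the rows of `P̃` are stochastically dominated
by the corresponding rows of `P` for all states `i < k`, and the initial laws
satisfy `π̃ ⪯_st π`, then `T_h ⪯_st T̃_h` for every level `h = 1, …, k`. -/
theorem hitting_times_st_order_of_rowwise_domination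
    (k : ℕ) (P Pt : Matrix (Fin (k + 1)) (Fin (k + 1)) ℝ)
    (hP : IsStochastic P) (hPt : IsStochastic Pt)
    (hsfP : SkipFree P) (hsfPt : SkipFree Pt)
    (π πt : Fin (k + 1) → ℝ) (hπ : IsProbVec π) (hπt : IsProbVec πt)
    (hinit : stDom πt π)
    (hrow : ∀ i : Fin (k + 1), (i : ℕ) < k → stDom (Pt i) (P i)) :
    ∀ h : ℕ, 1 ≤ h → ∀ (h2 : h ≤ k), ∀ n : ℕ,
      hitSurvival P π h h2 n ≤ hitSurvival Pt πt h h2 n := by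
  intro h _ h2 n
  set e := Fin.castLE (h2.trans k.le_succ) with he
  rw [hitSurvival_eq, hitSurvival_eq]
  have step1 : ∑ i : Fin h, π (e i) * phi P h h2 n i
      ≤ ∑ i : Fin h, π (e i) * phi Pt h h2 n i :=
    Finset.sum_le_sum fun i _ => mul_le_mul_of_nonneg_left
      (phi_cross P Pt hP hPt hsfPt hrow h h2 n i) (hπ.1 _)
  have step2 : ∑ i : Fin h, π (e i) * phi Pt h h2 n i
      ≤ ∑ i : Fin h, πt (e i) * phi Pt h h2 n i := by
    rw [← sum_G_eq Pt h h2 n π, ← sum_G_eq Pt h h2 n πt]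
    exact tool πt π _ hinit (by rw [hπt.2, hπ.2]) (G_antitone Pt hPt hsfPt h h2 n)
  exact step1.trans step2
end

section
/- Let A and A' be stochastic matrices on E_k = {0,...,k}. Then A ⊴ A' holds if and only if for every pair of states i ≤ i' in E_k there exists a probability distribution γ on E_k × E_k whose first marginal equals the row a_{i,·} of A, whose second marginal equals the row a'_{i',·} of A', and which is supported on the set {(y,y') ∈ E_k × E_k : y ≤ y'} (i.e. γ(y,y') = 0 whenever y > y'). -/
open Finset Matrix

/-- CDF of a vector on `Fin (k+1)`. -/
noncomputable def cdf {k : ℕ} (μ : Fin (k+1) → ℝ) (n : ℕ) : ℝ :=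
  ∑ l ∈ Finset.univ.filter (fun l : Fin (k+1) => (l:ℕ) < n), μ l

lemma cdf_zero {k : ℕ} (μ : Fin (k+1) → ℝ) : cdf μ 0 = 0 := by
  simp [cdf]

lemma cdf_top {k : ℕ} (μ : Fin (k+1) → ℝ) {n : ℕ} (hn : k + 1 ≤ n) :
    cdf μ n = ∑ l, μ l := by
  unfold cdf
  congr 1
  ext l
  simp [lt_of_lt_of_le l.isLt hn]

lemma cdf_succ {k : ℕ} (μ : Fin (k+1) → ℝ) (y : Fin (k+1)) :
    cdf μ ((y:ℕ)+1) = cdf μ (y:ℕ) + μ y := by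
  unfold cdf
  have h : (Finset.univ.filter (fun l : Fin (k+1) => (l:ℕ) < (y:ℕ)+1))
      = insert y (Finset.univ.filter (fun l : Fin (k+1) => (l:ℕ) < (y:ℕ))) := by
    ext l
    simp [Nat.lt_succ_iff, Fin.ext_iff, le_iff_lt_or_eq, or_comm]
  rw [h, Finset.sum_insert (by simp), add_comm]

lemma cdf_mono {k : ℕ} (μ : Fin (k+1) → ℝ) (h : ∀ l, 0 ≤ μ l)
    {m n : ℕ} (hmn : m ≤ n) : cdf μ m ≤ cdf μ n := by
  apply Finset.sum_le_sum_of_subset_of_nonneg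
  · intro l hl
    simp only [Finset.mem_filter, Finset.mem_univ, true_and] at *
    omega
  · intro l _ _; exact h l

lemma overlap (a b c d : ℝ) (hab : a ≤ b) (hcd : c ≤ d) :
    min b (max a d) - min b (max a c) = max 0 (min b d - max a c) := by
  rcases le_total a c <;> rcases le_total a d <;> rcases le_total b c <;>
    rcases le_total b d <;> simp_all [min_def, max_def] <;>
    first
      | (split_ifs <;> linarith)
      | linarith

/-- complement-sum identity -/
lemma sum_ge_eq {k : ℕ} (μ : Fin (k+1) → ℝ) (j : Fin (k+1)) :
    ∑ l ∈ Finset.univ.filter (fun l => j ≤ l), μ l = (∑ l, μ l) - cdf μ (j:ℕ) := by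
  have h := Finset.sum_filter_add_sum_filter_not Finset.univ
    (fun l : Fin (k+1) => (l:ℕ) < (j:ℕ)) μ
  have h2 : (Finset.univ.filter (fun l : Fin (k+1) => ¬ (l:ℕ) < (j:ℕ)))
      = Finset.univ.filter (fun l => j ≤ l) := by
    ext l; simp only [Finset.mem_filter, Finset.mem_univ, true_and, Fin.le_def, Nat.not_lt]
  rw [h2] at h
  unfold cdf
  linarith

lemma exists_coupling {k : ℕ} (μ ν : Fin (k+1) → ℝ)
    (hμ0 : ∀ l, 0 ≤ μ l) (hμ1 : ∑ l, μ l = 1)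
    (hν0 : ∀ l, 0 ≤ ν l) (hν1 : ∑ l, ν l = 1)
    (hdom : stDom μ ν) :
    ∃ γ : Fin (k+1) → Fin (k+1) → ℝ,
      (∀ y y', 0 ≤ γ y y') ∧
      (∀ y, ∑ y', γ y y' = μ y) ∧
      (∀ y', ∑ y, γ y y' = ν y') ∧
      (∀ y y' : Fin (k+1), y' < y → γ y y' = 0) := by
  set F := cdf μ with hF
  set G := cdf ν with hG
  have hF01 : ∀ n, 0 ≤ F n ∧ F n ≤ 1 := by
    intro n
    constructor
    · exact Finset.sum_nonneg fun l _ => hμ0 l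
    · calc F n ≤ F (n + (k+1)) := cdf_mono μ hμ0 (Nat.le_add_right _ _)
        _ = 1 := by rw [hF, cdf_top μ (by omega), hμ1]
  have hG01 : ∀ n, 0 ≤ G n ∧ G n ≤ 1 := by
    intro n
    constructor
    · exact Finset.sum_nonneg fun l _ => hν0 l
    · calc G n ≤ G (n + (k+1)) := cdf_mono ν hν0 (Nat.le_add_right _ _)
        _ = 1 := by rw [hG, cdf_top ν (by omega), hν1]
  have hGF : ∀ n, G n ≤ F n := by
    intro n
    by_cases hn : n ≤ k
    · have h := hdom ⟨n, by omega⟩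
      rw [sum_ge_eq, sum_ge_eq, hμ1, hν1] at h
      simp only [Fin.val_mk] at h
      show cdf ν n ≤ cdf μ n
      linarith
    · rw [hF, hG, cdf_top μ (by omega), cdf_top ν (by omega), hμ1, hν1]
  have hFtop : F (k+1) = 1 := by rw [hF, cdf_top μ (le_refl _), hμ1]
  have hGtop : G (k+1) = 1 := by rw [hG, cdf_top ν (le_refl _), hν1]
  have hF0 : F 0 = 0 := cdf_zero μ
  have hG0 : G 0 = 0 := cdf_zero ν
  have hFs : ∀ y : Fin (k+1), F ((y:ℕ)+1) = F (y:ℕ) + μ y := fun y => cdf_succ μ y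
  have hGs : ∀ y : Fin (k+1), G ((y:ℕ)+1) = G (y:ℕ) + ν y := fun y => cdf_succ ν y
  refine ⟨fun y y' => max 0 (min (F ((y:ℕ)+1)) (G ((y':ℕ)+1)) - max (F (y:ℕ)) (G (y':ℕ))),
    fun y y' => le_max_left _ _, ?_, ?_, ?_⟩
  · -- row marginal
    intro y
    have hab : F (y:ℕ) ≤ F ((y:ℕ)+1) := by rw [hFs y]; linarith [hμ0 y]
    have key : ∀ y' : Fin (k+1),
        max 0 (min (F ((y:ℕ)+1)) (G ((y':ℕ)+1)) - max (F (y:ℕ)) (G (y':ℕ)))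
          = min (F ((y:ℕ)+1)) (max (F (y:ℕ)) (G ((y':ℕ)+1)))
            - min (F ((y:ℕ)+1)) (max (F (y:ℕ)) (G (y':ℕ))) := by
      intro y'
      have hcd : G (y':ℕ) ≤ G ((y':ℕ)+1) := by rw [hGs y']; linarith [hν0 y']
      exact (overlap _ _ _ _ hab hcd).symm
    rw [Finset.sum_congr rfl (fun y' _ => key y')]
    rw [Fin.sum_univ_eq_sum_range (fun n =>
      min (F ((y:ℕ)+1)) (max (F (y:ℕ)) (G (n+1)))
        - min (F ((y:ℕ)+1)) (max (F (y:ℕ)) (G n)))]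
    rw [Finset.sum_range_sub (fun n => min (F ((y:ℕ)+1)) (max (F (y:ℕ)) (G n)))]
    rw [hG0, hGtop]
    rw [max_eq_left (hF01 (y:ℕ)).1, min_eq_right hab,
      max_eq_right (hF01 (y:ℕ)).2, min_eq_left (hF01 ((y:ℕ)+1)).2]
    rw [hFs y]; ring
  · -- column marginal
    intro y'
    have hcd : G (y':ℕ) ≤ G ((y':ℕ)+1) := by rw [hGs y']; linarith [hν0 y']
    have key : ∀ y : Fin (k+1),
        max 0 (min (F ((y:ℕ)+1)) (G ((y':ℕ)+1)) - max (F (y:ℕ)) (G (y':ℕ)))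
          = min (G ((y':ℕ)+1)) (max (G (y':ℕ)) (F ((y:ℕ)+1)))
            - min (G ((y':ℕ)+1)) (max (G (y':ℕ)) (F (y:ℕ))) := by
      intro y
      have hab : F (y:ℕ) ≤ F ((y:ℕ)+1) := by rw [hFs y]; linarith [hμ0 y]
      rw [min_comm (F ((y:ℕ)+1)) (G ((y':ℕ)+1)), max_comm (F (y:ℕ)) (G (y':ℕ))]
      exact (overlap _ _ _ _ hcd hab).symm
    rw [Finset.sum_congr rfl (fun y _ => key y)]
    rw [Fin.sum_univ_eq_sum_range (fun n =>
      min (G ((y':ℕ)+1)) (max (G (y':ℕ)) (F (n+1)))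
        - min (G ((y':ℕ)+1)) (max (G (y':ℕ)) (F n)))]
    rw [Finset.sum_range_sub (fun n => min (G ((y':ℕ)+1)) (max (G (y':ℕ)) (F n)))]
    rw [hF0, hFtop]
    rw [max_eq_left (hG01 (y':ℕ)).1, min_eq_right hcd,
      max_eq_right (hG01 (y':ℕ)).2, min_eq_left (hG01 ((y':ℕ)+1)).2]
    rw [hGs y']; ring
  · -- support
    intro y y' hlt
    have h1 : (y':ℕ)+1 ≤ (y:ℕ) := hlt
    have h2 : G ((y':ℕ)+1) ≤ F (y:ℕ) :=
      le_trans (cdf_mono ν hν0 h1) (hGF _)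
    have : min (F ((y:ℕ)+1)) (G ((y':ℕ)+1)) - max (F (y:ℕ)) (G (y':ℕ)) ≤ 0 := by
      have := min_le_right (F ((y:ℕ)+1)) (G ((y':ℕ)+1))
      have := le_max_left (F (y:ℕ)) (G (y':ℕ))
      linarith
    exact max_eq_left this

/-- The relation `A' ⊴ A`. -/
def tri {m : ℕ} (A' A : Matrix (Fin m) (Fin m) ℝ) : Prop :=
  ∀ i j : Fin m, i ≤ j → stDom (A' i) (A j)

/-- Lemma 1 (De Santis–Spizzichino): `A ⊴ A'` holds iff for all states
`i ≤ i'` there is a coupling `γ` of the rows `a_{i,·}` and `a'_{i',·}`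
supported on `{(y,y') : y ≤ y'}`. -/
theorem tri_iff_coupling
    (k : ℕ) (A A' : Matrix (Fin (k + 1)) (Fin (k + 1)) ℝ)
    (hA : IsStochastic A) (hA' : IsStochastic A') :
    tri A A' ↔
      ∀ i i' : Fin (k + 1), i ≤ i' →
        ∃ γ : Fin (k + 1) → Fin (k + 1) → ℝ,
          (∀ y y', 0 ≤ γ y y') ∧
          (∀ y, ∑ y', γ y y' = A i y) ∧
          (∀ y', ∑ y, γ y y' = A' i' y') ∧
          (∀ y y' : Fin (k + 1), y' < y → γ y y' = 0) := by
  constructor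
  · intro h i i' hii'
    exact exists_coupling (A i) (A' i') (hA.1 i) (hA.2 i) (hA'.1 i') (hA'.2 i')
      (h i i' hii')
  · intro h i i' hii' j
    obtain ⟨γ, hpos, hrow, hcol, hsupp⟩ := h i i' hii'
    calc ∑ l ∈ Finset.univ.filter (fun l => j ≤ l), A i l
        = ∑ l ∈ Finset.univ.filter (fun l => j ≤ l),
            ∑ y' ∈ Finset.univ.filter (fun y' => j ≤ y'), γ l y' := by
          refine Finset.sum_congr rfl fun l hl => ?_
          simp only [Finset.mem_filter, Finset.mem_univ, true_and] at hl
          rw [← hrow l]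
          symm
          refine Finset.sum_filter_of_ne fun y' _ hne => ?_
          by_contra hy'
          exact hne (hsupp l y' (lt_of_lt_of_le (lt_of_not_ge hy') hl))
      _ ≤ ∑ l, ∑ y' ∈ Finset.univ.filter (fun y' => j ≤ y'), γ l y' := by
          refine Finset.sum_le_sum_of_subset_of_nonneg (Finset.filter_subset _ _)
            fun l _ _ => Finset.sum_nonneg fun y' _ => hpos l y'
      _ = ∑ y' ∈ Finset.univ.filter (fun y' => j ≤ y'), A' i' y' := by
          rw [Finset.sum_comm]
          exact Finset.sum_congr rfl fun y' _ => hcol y'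
end

section
/- If A, A', B, B' are stochastic matrices on E_k = {0,...,k} such that A ⊴ A' and B ⊴ B', then the products satisfy AB ⊴ A'B'. -/
open Finset Matrix

/-- Key lemma: if `μ ⪯_st ν` with equal total mass, then for monotone `g`,
`∑ μ g ≤ ∑ ν g`. -/
lemma sum_mul_le_of_stDom {k : ℕ} (μ ν g : Fin (k+1) → ℝ)
    (hμν : stDom μ ν) (hs : ∑ j, μ j = ∑ j, ν j) (hg : Monotone g) :
    ∑ j, μ j * g j ≤ ∑ j, ν j * g j := by
  set d : Fin (k+1) → ℝ := fun j => ν j - μ j with hd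
  have hdsum : ∑ j, d j = 0 := by
    simp only [hd, Finset.sum_sub_distrib]; linarith
  set G : ℕ → ℝ := fun t => g ⟨min t k, by omega⟩ with hG
  have hGmono : Monotone G := fun a b hab => hg (by
    rw [Fin.mk_le_mk]; omega)
  have hgG : ∀ j : Fin (k+1), g j = G j.val := by
    intro j
    have : min j.val k = j.val := by omega
    simp [hG, this]
  have tele : ∀ j : Fin (k+1), g j = G 0 + ∑ t ∈ range j.val, (G (t+1) - G t) := by
    intro j
    rw [Finset.sum_range_sub, hgG j]
    ring
  rw [← sub_nonneg]
  have key : ∑ j, ν j * g j - ∑ j, μ j * g j = ∑ j, d j * g j := by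
    rw [← Finset.sum_sub_distrib]
    congr 1; ext j; simp [hd]; ring
  rw [key]
  calc ∑ j, d j * g j
      = ∑ j, d j * (G 0 + ∑ t ∈ range j.val, (G (t+1) - G t)) := by
        exact Finset.sum_congr rfl fun j _ => by rw [tele j]
    _ = (∑ j, d j) * G 0 + ∑ j : Fin (k+1), ∑ t ∈ range j.val, d j * (G (t+1) - G t) := by
        rw [Finset.sum_mul, ← Finset.sum_add_distrib]
        exact Finset.sum_congr rfl fun j _ => by rw [mul_add, Finset.mul_sum]
    _ = ∑ j : Fin (k+1), ∑ t ∈ range k, if t < j.val then d j * (G (t+1) - G t) else 0 := by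
        rw [hdsum, zero_mul, zero_add]
        refine Finset.sum_congr rfl fun j _ => ?_
        rw [← Finset.sum_filter]
        congr 1
        ext t
        simp only [Finset.mem_filter, Finset.mem_range]
        omega
    _ = ∑ t ∈ range k, (G (t+1) - G t) *
          ∑ j ∈ univ.filter (fun j : Fin (k+1) => t < j.val), d j := by
        rw [Finset.sum_comm]
        refine Finset.sum_congr rfl fun t _ => ?_
        rw [Finset.mul_sum, Finset.sum_filter]
        refine Finset.sum_congr rfl fun j _ => ?_
        split <;> ring
    _ ≥ 0 := by
        refine Finset.sum_nonneg fun t ht => mul_nonneg ?_ ?_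
        · have := hGmono (Nat.le_succ t); linarith
        · simp only [Finset.mem_range] at ht
          have heq : (univ.filter (fun j : Fin (k+1) => t < j.val)) =
              (univ.filter (fun j : Fin (k+1) => (⟨t+1, by omega⟩ : Fin (k+1)) ≤ j)) := by
            ext j; simp [Fin.le_def]
          have := hμν ⟨t+1, by omega⟩
          rw [heq]
          simp only [hd, Finset.sum_sub_distrib]
          linarith

/-- Lemma 2, first part (De Santis–Spizzichino): the relation `⊴` is
preserved under matrix products. -/
theorem tri_mul
    (k : ℕ) (A A' B B' : Matrix (Fin (k + 1)) (Fin (k + 1)) ℝ)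
    (hA : IsStochastic A) (hA' : IsStochastic A')
    (hB : IsStochastic B) (hB' : IsStochastic B')
    (hAA : tri A A') (hBB : tri B B') :
    tri (A * B) (A' * B') := by
  intro i j hij t
  set S : Finset (Fin (k+1)) := univ.filter (fun l => t ≤ l) with hS
  set F : Fin (k+1) → ℝ := fun m => ∑ l ∈ S, B m l with hF
  set F' : Fin (k+1) → ℝ := fun m => ∑ l ∈ S, B' m l with hF'
  have hne : ∀ m : Fin (k+1), (univ.filter (fun m' : Fin (k+1) => m ≤ m')).Nonempty :=
    fun m => ⟨m, by simp⟩
  set H : Fin (k+1) → ℝ := fun m => (univ.filter (fun m' : Fin (k+1) => m ≤ m')).inf' (hne m) F'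
    with hH
  have hFH : ∀ m, F m ≤ H m := by
    intro m
    refine Finset.le_inf' _ _ fun m' hm' => ?_
    simp only [Finset.mem_filter] at hm'
    show ∑ l ∈ S, B m l ≤ ∑ l ∈ S, B' m' l
    exact hBB m m' hm'.2 t
  have hHF' : ∀ m, H m ≤ F' m :=
    fun m => Finset.inf'_le _ (by simp)
  have hHmono : Monotone H := by
    intro m₁ m₂ h12
    refine Finset.le_inf' _ _ fun b hb => ?_
    simp only [Finset.mem_filter] at hb
    exact Finset.inf'_le _ (by simp [le_trans h12 hb.2])
  have lhs_eq : ∑ l ∈ S, (A * B) i l = ∑ m, A i m * F m := by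
    simp only [Matrix.mul_apply, hF]
    rw [Finset.sum_comm]
    exact Finset.sum_congr rfl fun m _ => (Finset.mul_sum _ _ _).symm
  have rhs_eq : ∑ l ∈ S, (A' * B') j l = ∑ m, A' j m * F' m := by
    simp only [Matrix.mul_apply, hF']
    rw [Finset.sum_comm]
    exact Finset.sum_congr rfl fun m _ => (Finset.mul_sum _ _ _).symm
  show ∑ l ∈ S, (A * B) i l ≤ ∑ l ∈ S, (A' * B') j l
  rw [lhs_eq, rhs_eq]
  calc ∑ m, A i m * F m
      ≤ ∑ m, A i m * H m :=
        Finset.sum_le_sum fun m _ => mul_le_mul_of_nonneg_left (hFH m) (hA.1 i m)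
    _ ≤ ∑ m, A' j m * H m :=
        sum_mul_le_of_stDom (A i) (A' j) H (hAA i j hij) (by rw [hA.2 i, hA'.2 j]) hHmono
    _ ≤ ∑ m, A' j m * F' m :=
        Finset.sum_le_sum fun m _ => mul_le_mul_of_nonneg_left (hHF' m) (hA'.1 j m)
end

section
/- If (A_i)_{i=1,...,n} and (B_i)_{i=1,...,n} are stochastic matrices on E_k = {0,...,k} such that A_i ⊴ B_i for every i = 1,...,n, then the ordered products satisfy A_1 A_2 ⋯ A_n ⊴ B_1 B_2 ⋯ B_n. -/
open Finset Matrix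

/-- Expectation characterization: if `μ ⪯ ν` with equal total mass and `F` is
monotone, then `∑ μ F ≤ ∑ ν F`. -/
lemma expectation_le {m : ℕ} (μ ν : Fin (m + 1) → ℝ) (F : Fin (m + 1) → ℝ)
    (hF : Monotone F) (hsum : ∑ x, μ x = ∑ x, ν x) (hdom : stDom μ ν) :
    ∑ x, μ x * F x ≤ ∑ x, ν x * F x := by
  rw [← sub_nonneg, ← Finset.sum_sub_distrib]
  have hsub : ∀ x : Fin (m + 1), ν x * F x - μ x * F x = (ν x - μ x) * F x := by
    intro x; ring
  simp_rw [hsub]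
  set d : ℕ → ℝ := fun i => if h : i < m + 1 then ν ⟨i, h⟩ - μ ⟨i, h⟩ else 0 with hd
  set G : ℕ → ℝ := fun i => F ⟨min i m, by omega⟩ with hG
  have hdval : ∀ x : Fin (m + 1), d (x : ℕ) = ν x - μ x := by
    intro x
    simp only [hd, dif_pos x.isLt]
  have hGval : ∀ x : Fin (m + 1), G (x : ℕ) = F x := by
    intro x
    simp only [hG]
    congr 1
    apply Fin.ext
    simp
    omega
  have hGd : ∑ x : Fin (m + 1), (ν x - μ x) * F x = ∑ i ∈ Finset.range (m + 1), G i * d i := by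
    rw [← Fin.sum_univ_eq_sum_range (fun i => G i * d i)]
    exact Finset.sum_congr rfl fun x _ => by rw [hdval, hGval]; ring
  rw [hGd]
  have habel := Finset.sum_range_by_parts G d (m + 1)
  simp only [smul_eq_mul, Nat.add_sub_cancel] at habel
  rw [habel]
  have hdsum : ∑ i ∈ Finset.range (m + 1), d i = 0 := by
    rw [← Fin.sum_univ_eq_sum_range d]
    simp_rw [hdval, Finset.sum_sub_distrib, hsum, sub_self]
  rw [hdsum, mul_zero, zero_sub, neg_nonneg]
  apply Finset.sum_nonpos
  intro i hi
  rw [Finset.mem_range] at hi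
  have hi1 : i + 1 < m + 1 := by omega
  -- tail sums are nonnegative
  have htail : 0 ≤ ∑ j ∈ Finset.Ico (i + 1) (m + 1), d j := by
    have hfil : ∑ j ∈ Finset.Ico (i + 1) (m + 1), d j
        = ∑ l ∈ Finset.univ.filter (fun l => (⟨i + 1, hi1⟩ : Fin (m + 1)) ≤ l), (ν l - μ l) := by
      have h1 : Finset.Ico (i + 1) (m + 1) = (Finset.range (m + 1)).filter (fun x => i + 1 ≤ x) := by
        ext x; simp [Finset.mem_Ico, Finset.mem_range, Finset.mem_filter]; omega
      rw [h1, Finset.sum_filter,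
        ← Fin.sum_univ_eq_sum_range (fun x => if i + 1 ≤ x then d x else 0),
        Finset.sum_filter]
      apply Finset.sum_congr rfl
      intro x _
      by_cases hx : (⟨i + 1, hi1⟩ : Fin (m + 1)) ≤ x
      · rw [if_pos, if_pos hx, hdval]
        exact hx
      · rw [if_neg, if_neg hx]
        exact hx
    rw [hfil]
    have := hdom ⟨i + 1, hi1⟩
    rw [Finset.sum_sub_distrib]
    linarith
  -- the partial sum is nonpositive
  have hpart : ∑ j ∈ Finset.range (i + 1), d j ≤ 0 := by
    have hsplit : ∑ j ∈ Finset.range (i + 1), d j + ∑ j ∈ Finset.Ico (i + 1) (m + 1), d j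
        = ∑ j ∈ Finset.range (m + 1), d j := by
      rw [Finset.range_eq_Ico, Finset.range_eq_Ico]
      exact Finset.sum_Ico_consecutive d (by omega : 0 ≤ i + 1) (by omega : i + 1 ≤ m + 1)
    rw [hdsum] at hsplit
    linarith
  have hGmono : G i ≤ G (i + 1) := by
    apply hF
    simp [Fin.le_def]
  exact mul_nonpos_of_nonneg_of_nonpos (by linarith) hpart

/-- Key step: composition preserves stochastic dominance. -/
lemma step {m : ℕ} (μ ν : Fin (m + 1) → ℝ) (P Q : Matrix (Fin (m + 1)) (Fin (m + 1)) ℝ)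
    (hμ : ∀ x, 0 ≤ μ x) (hν : ∀ x, 0 ≤ ν x) (hsum : ∑ x, μ x = ∑ x, ν x)
    (hdom : stDom μ ν) (hPQ : tri P Q) :
    stDom (fun l => ∑ x, μ x * P x l) (fun l => ∑ x, ν x * Q x l) := by
  intro j
  have hL : ∑ l ∈ Finset.univ.filter (fun l => j ≤ l), ∑ x, μ x * P x l
      = ∑ x, μ x * ∑ l ∈ Finset.univ.filter (fun l => j ≤ l), P x l := by
    rw [Finset.sum_comm]
    simp_rw [Finset.mul_sum]
  have hR : ∑ l ∈ Finset.univ.filter (fun l => j ≤ l), ∑ x, ν x * Q x l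
      = ∑ x, ν x * ∑ l ∈ Finset.univ.filter (fun l => j ≤ l), Q x l := by
    rw [Finset.sum_comm]
    simp_rw [Finset.mul_sum]
  simp only []
  rw [hL, hR]
  set f : Fin (m + 1) → ℝ := fun x => ∑ l ∈ Finset.univ.filter (fun l => j ≤ l), P x l with hf
  set g : Fin (m + 1) → ℝ := fun x => ∑ l ∈ Finset.univ.filter (fun l => j ≤ l), Q x l with hg
  have hfg : ∀ x y : Fin (m + 1), x ≤ y → f x ≤ g y := fun x y hxy => hPQ x y hxy j
  set F : Fin (m + 1) → ℝ := fun x => (Finset.Iic x).sup' Finset.nonempty_Iic f with hF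
  have hFf : ∀ x, f x ≤ F x := fun x => Finset.le_sup' f (Finset.mem_Iic.mpr le_rfl)
  have hFmono : Monotone F := by
    intro x y hxy
    apply Finset.sup'_le
    intro t ht
    exact Finset.le_sup' f (Finset.mem_Iic.mpr ((Finset.mem_Iic.mp ht).trans hxy))
  have hFg : ∀ x, F x ≤ g x := by
    intro x
    apply Finset.sup'_le
    intro t ht
    exact hfg t x (Finset.mem_Iic.mp ht)
  calc ∑ x, μ x * f x ≤ ∑ x, μ x * F x :=
        Finset.sum_le_sum fun x _ => mul_le_mul_of_nonneg_left (hFf x) (hμ x)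
    _ ≤ ∑ x, ν x * F x := expectation_le μ ν F hFmono hsum hdom
    _ ≤ ∑ x, ν x * g x :=
        Finset.sum_le_sum fun x _ => mul_le_mul_of_nonneg_left (hFg x) (hν x)

lemma isStochastic_one {m : ℕ} : IsStochastic (1 : Matrix (Fin (m + 1)) (Fin (m + 1)) ℝ) := by
  constructor
  · intro i j
    rw [Matrix.one_apply]
    split_ifs <;> norm_num
  · intro i
    simp [Matrix.one_apply]

lemma isStochastic_mul {m : ℕ} {M P : Matrix (Fin (m + 1)) (Fin (m + 1)) ℝ}
    (hM : IsStochastic M) (hP : IsStochastic P) : IsStochastic (M * P) := by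
  constructor
  · intro i j
    rw [Matrix.mul_apply]
    exact Finset.sum_nonneg fun x _ => mul_nonneg (hM.1 i x) (hP.1 x j)
  · intro i
    simp_rw [Matrix.mul_apply]
    rw [Finset.sum_comm]
    simp_rw [← Finset.mul_sum, hP.2, mul_one]
    exact hM.2 i

lemma tri_one {m : ℕ} : tri (1 : Matrix (Fin (m + 1)) (Fin (m + 1)) ℝ) 1 := by
  intro i j hij j'
  have key : ∀ i : Fin (m + 1),
      ∑ l ∈ Finset.univ.filter (fun l => j' ≤ l), (1 : Matrix (Fin (m + 1)) (Fin (m + 1)) ℝ) i l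
      = if j' ≤ i then 1 else 0 := by
    intro i
    simp_rw [Matrix.one_apply]
    rw [Finset.sum_ite_eq]
    simp
  rw [key, key]
  split_ifs with h1 h2
  · exact le_rfl
  · exact absurd (h1.trans hij) h2
  · norm_num
  · exact le_rfl

lemma tri_mul_s6 {m : ℕ} {M N P Q : Matrix (Fin (m + 1)) (Fin (m + 1)) ℝ}
    (hM : IsStochastic M) (hN : IsStochastic N)
    (hMN : tri M N) (hPQ : tri P Q) : tri (M * P) (N * Q) := by
  intro i j hij
  have := step (M i) (N j) P Q (hM.1 i) (hN.1 j) (by rw [hM.2 i, hN.2 j]) (hMN i j hij) hPQ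
  intro j'
  have h' := this j'
  simp only [Matrix.mul_apply]
  exact h'

/-- Lemma 2, second part (De Santis–Spizzichino): the relation `⊴` is
preserved under ordered products of families of stochastic matrices. -/
theorem tri_list_prod
    (k n : ℕ) (A B : Fin n → Matrix (Fin (k + 1)) (Fin (k + 1)) ℝ)
    (hA : ∀ i, IsStochastic (A i)) (hB : ∀ i, IsStochastic (B i))
    (h : ∀ i, tri (A i) (B i)) :
    tri (List.ofFn A).prod (List.ofFn B).prod := by
  induction n with
  | zero =>
    simp only [List.ofFn_zero, List.prod_nil]
    exact tri_one
  | succ n ih =>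
    rw [List.ofFn_succ, List.prod_cons, List.ofFn_succ, List.prod_cons]
    exact tri_mul_s6 (hA 0) (hB 0) (h 0)
      (ih (fun i => A i.succ) (fun i => B i.succ)
        (fun i => hA i.succ) (fun i => hB i.succ) (fun i => h i.succ))
end

section
/- Let P̃ and P be stochastic matrices on E_k = {0,...,k}, and suppose there exist two coprime positive integers n_1 and n_2 such that P̃^{n_1} ⊴ P^{n_1} and P̃^{n_2} ⊴ P^{n_2}. Then P̃^n ⊴ P^n for every n ≥ n̂(n_1,n_2), where n̂(n_1,n_2) := inf{ r ∈ ℕ : every integer r' ≥ r can be written as r' = a·n_1 + b·n_2 with a, b ∈ ℕ } (this number is finite since n_1 and n_2 are coprime, and n̂(n_1,n_2) ≤ n_1 n_2). -/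
open Finset Matrix

/-- `n̂(n₁,n₂)`: the least `r` such that every integer `r' ≥ r` can be written
as `a n₁ + b n₂` with `a b ∈ ℕ`. -/
noncomputable def nhat (n1 n2 : ℕ) : ℕ :=
  sInf { r : ℕ | ∀ r' : ℕ, r ≤ r' → ∃ a b : ℕ, r' = a * n1 + b * n2 }

/-! ### Auxiliary lemmas -/

lemma my_abel_nonneg (m : ℕ) (d f : ℕ → ℝ)
    (hsum : ∑ t ∈ Finset.range m, d t = 0)
    (hT : ∀ j, 0 ≤ ∑ t ∈ Finset.Ico j m, d t)
    (hf : ∀ j, j + 1 < m → f j ≤ f (j + 1)) :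
    0 ≤ ∑ t ∈ Finset.range m, d t * f t := by
  set g : ℕ → ℝ := fun j => if j + 1 < m then f (j + 1) - f j else 0 with hg
  have hg0 : ∀ j, 0 ≤ g j := by
    intro j
    simp only [hg]
    split
    · linarith [hf j ‹_›]
    · exact le_refl 0
  have hft : ∀ t, t < m → f t = f 0 + ∑ j ∈ Finset.range t, g j := by
    intro t
    induction t with
    | zero => simp
    | succ t ih =>
      intro ht
      have ht' : t < m := Nat.lt_of_succ_lt ht
      rw [Finset.sum_range_succ, ← add_assoc, ← ih ht']
      have : g t = f (t + 1) - f t := by simp only [hg]; rw [if_pos ht]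
      rw [this]; ring
  have step1 : ∑ t ∈ Finset.range m, d t * f t
      = ∑ t ∈ Finset.range m, d t * f 0 + ∑ t ∈ Finset.range m, ∑ j ∈ Finset.range t, d t * g j := by
    rw [← Finset.sum_add_distrib]
    apply Finset.sum_congr rfl
    intro t ht
    rw [hft t (Finset.mem_range.mp ht), mul_add, Finset.mul_sum]
  have step2 : ∑ t ∈ Finset.range m, d t * f 0 = 0 := by
    rw [← Finset.sum_mul, hsum, zero_mul]
  have swap : ∑ t ∈ Finset.range m, ∑ j ∈ Finset.range t, d t * g j
      = ∑ j ∈ Finset.range m, ∑ t ∈ Finset.Ico (j + 1) m, d t * g j := by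
    have h1 : ∀ t ∈ Finset.range m, ∑ j ∈ Finset.range t, d t * g j
        = ∑ j ∈ Finset.range m, if j < t then d t * g j else 0 := by
      intro t ht
      rw [Finset.sum_ite, Finset.sum_const_zero, add_zero]
      apply Finset.sum_congr _ (fun _ _ => rfl)
      ext j
      simp only [Finset.mem_filter, Finset.mem_range]
      constructor
      · intro h; exact ⟨h.trans (Finset.mem_range.mp ht), h⟩
      · intro h; exact h.2
    rw [Finset.sum_congr rfl h1, Finset.sum_comm]
    apply Finset.sum_congr rfl
    intro j _
    rw [Finset.sum_ite, Finset.sum_const_zero, add_zero]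
    apply Finset.sum_congr _ (fun _ _ => rfl)
    ext t
    simp only [Finset.mem_filter, Finset.mem_range, Finset.mem_Ico]
    omega
  rw [step1, step2, zero_add, swap]
  apply Finset.sum_nonneg
  intro j _
  rw [← Finset.sum_mul]
  exact mul_nonneg (hT (j + 1)) (hg0 j)

lemma my_stDom_mono_sum {m : ℕ} (μ ν f : Fin m → ℝ) (h : stDom μ ν)
    (hμν : ∑ l, μ l = ∑ l, ν l) (hf : Monotone f) :
    ∑ l, μ l * f l ≤ ∑ l, ν l * f l := by
  -- reduce to a statement about ℕ
  set d : ℕ → ℝ := fun t => if h : t < m then ν ⟨t, h⟩ - μ ⟨t, h⟩ else 0 with hd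
  set f' : ℕ → ℝ := fun t => if h : t < m then f ⟨t, h⟩ else 0 with hf'
  have key : 0 ≤ ∑ t ∈ Finset.range m, d t * f' t := by
    apply my_abel_nonneg
    · have e0 : ∑ t ∈ Finset.range m, d t = ∑ l : Fin m, (ν l - μ l) := by
        rw [Finset.sum_range]
        apply Finset.sum_congr rfl
        intro l _
        simp only [hd, Fin.is_lt, dif_pos, Fin.eta]
      rw [e0, Finset.sum_sub_distrib]
      linarith
    · intro j
      by_cases hj : j < m
      · have e1 : ∑ t ∈ Finset.Ico j m, d t
            = ∑ l ∈ Finset.univ.filter (fun l => (⟨j, hj⟩ : Fin m) ≤ l), (ν l - μ l) := by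
          rw [Finset.sum_filter]
          rw [show Finset.Ico j m = (Finset.range m).filter (fun t => j ≤ t) by
            ext t; simp [Finset.mem_Ico, Finset.mem_filter]; omega]
          rw [Finset.sum_filter, Finset.sum_range]
          apply Finset.sum_congr rfl
          intro l _
          simp only [hd, Fin.mk_le_mk, Fin.is_lt, dif_pos, Fin.eta, Fin.le_def]
        rw [e1]
        rw [Finset.sum_sub_distrib]
        have := h ⟨j, hj⟩
        linarith
      · rw [Finset.Ico_eq_empty (by omega), Finset.sum_empty]
    · intro j hj
      have hj' : j < m := Nat.lt_of_succ_lt hj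
      simp only [hf', dif_pos hj, dif_pos hj']
      exact hf (by simp [Fin.mk_le_mk])
  have e2 : ∑ t ∈ Finset.range m, d t * f' t = ∑ l, (ν l - μ l) * f l := by
    rw [Finset.sum_range]
    apply Finset.sum_congr rfl
    intro l _
    simp only [hd, hf', Fin.is_lt, dif_pos, Fin.eta]
  rw [e2] at key
  have e3 : ∑ l, (ν l - μ l) * f l = ∑ l, ν l * f l - ∑ l, μ l * f l := by
    rw [← Finset.sum_sub_distrib]
    apply Finset.sum_congr rfl
    intro l _; ring
  linarith [e3 ▸ key]

lemma my_isStochastic_pow {m : ℕ} {P : Matrix (Fin m) (Fin m) ℝ} (hP : IsStochastic P)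
    (n : ℕ) : IsStochastic (P ^ n) := by
  induction n with
  | zero =>
    constructor
    · intro i j
      simp only [pow_zero, Matrix.one_apply]
      split <;> norm_num
    · intro i
      simp [pow_zero, Matrix.one_apply]
  | succ n ih =>
    rw [pow_succ]
    constructor
    · intro i j
      rw [Matrix.mul_apply]
      exact Finset.sum_nonneg fun t _ => mul_nonneg (ih.1 i t) (hP.1 t j)
    · intro i
      simp only [Matrix.mul_apply]
      rw [Finset.sum_comm]
      calc ∑ t, ∑ j, (P ^ n) i t * P t j = ∑ t, (P ^ n) i t * ∑ j, P t j := by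
            simp [Finset.mul_sum]
        _ = ∑ t, (P ^ n) i t := by simp [hP.2]
        _ = 1 := ih.2 i

lemma my_tri_one {m : ℕ} : tri (1 : Matrix (Fin m) (Fin m) ℝ) 1 := by
  intro i j hij mth
  have key : ∀ x : Fin m, ∑ l ∈ Finset.univ.filter (fun l => mth ≤ l), (1 : Matrix (Fin m) (Fin m) ℝ) x l
      = if mth ≤ x then 1 else 0 := by
    intro x
    simp only [Matrix.one_apply]
    rw [Finset.sum_ite_eq]
    simp [Finset.mem_filter]
  rw [key i, key j]
  by_cases hi : mth ≤ i
  · rw [if_pos hi, if_pos (hi.trans hij)]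
  · rw [if_neg hi]
    split <;> norm_num

lemma my_tri_mul {m : ℕ} {A' A B' B : Matrix (Fin m) (Fin m) ℝ}
    (hA' : IsStochastic A') (hA : IsStochastic A)
    (hAA : tri A' A) (hBB : tri B' B) :
    tri (A' * B') (A * B) := by
  intro i j hij mth
  set s := Finset.univ.filter (fun l => mth ≤ l) with hs
  set F' : Fin m → ℝ := fun t => ∑ l ∈ s, B' t l with hF'
  set F : Fin m → ℝ := fun t => ∑ l ∈ s, B t l with hF
  have hswap' : ∑ l ∈ s, (A' * B') i l = ∑ t, A' i t * F' t := by
    simp only [Matrix.mul_apply, hF']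
    rw [Finset.sum_comm]
    simp [Finset.mul_sum]
  have hswap : ∑ l ∈ s, (A * B) j l = ∑ t, A j t * F t := by
    simp only [Matrix.mul_apply, hF]
    rw [Finset.sum_comm]
    simp [Finset.mul_sum]
  have hF'F : ∀ t u : Fin m, t ≤ u → F' t ≤ F u := fun t u htu => hBB t u htu mth
  set e : Fin m → ℝ := fun t =>
    (Finset.univ.filter (fun u => t ≤ u)).inf' ⟨t, by simp⟩ F with he
  have he_mono : Monotone e := by
    intro t t' htt'
    apply Finset.le_inf'
    intro u hu
    apply Finset.inf'_le
    simp only [Finset.mem_filter, Finset.mem_univ, true_and] at hu ⊢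
    exact htt'.trans hu
  have hF'e : ∀ t, F' t ≤ e t := by
    intro t
    apply Finset.le_inf'
    intro u hu
    simp only [Finset.mem_filter, Finset.mem_univ, true_and] at hu
    exact hF'F t u hu
  have heF : ∀ t, e t ≤ F t := fun t => Finset.inf'_le _ (by simp)
  calc ∑ l ∈ s, (A' * B') i l = ∑ t, A' i t * F' t := hswap'
    _ ≤ ∑ t, A' i t * e t :=
        Finset.sum_le_sum fun t _ => mul_le_mul_of_nonneg_left (hF'e t) (hA'.1 i t)
    _ ≤ ∑ t, A j t * e t :=
        my_stDom_mono_sum (A' i) (A j) e (hAA i j hij) (by rw [hA'.2 i, hA.2 j]) he_mono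
    _ ≤ ∑ t, A j t * F t :=
        Finset.sum_le_sum fun t _ => mul_le_mul_of_nonneg_left (heF t) (hA.1 j t)
    _ = ∑ l ∈ s, (A * B) j l := hswap.symm

lemma my_tri_pow {m : ℕ} {A' A : Matrix (Fin m) (Fin m) ℝ}
    (hA' : IsStochastic A') (hA : IsStochastic A) (hAA : tri A' A) (n : ℕ) :
    tri (A' ^ n) (A ^ n) := by
  induction n with
  | zero => simpa using my_tri_one
  | succ n ih =>
    rw [pow_succ, pow_succ]
    exact my_tri_mul (my_isStochastic_pow hA' n) (my_isStochastic_pow hA n) ih hAA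

lemma my_rep (n1 n2 : ℕ) (hn1 : 0 < n1) (hn2 : 0 < n2) (hcop : Nat.Coprime n1 n2) :
    ∀ r' : ℕ, n1 * n2 ≤ r' → ∃ a b : ℕ, r' = a * n1 + b * n2 := by
  intro r' hr'
  haveI : NeZero n2 := ⟨hn2.ne'⟩
  have hu : IsUnit (n1 : ZMod n2) := by
    rw [ZMod.isUnit_iff_coprime]; exact hcop
  set x : ℕ := ((r' : ZMod n2) * (n1 : ZMod n2)⁻¹).val with hx
  have hxlt : x < n2 := ZMod.val_lt _
  have hxle : x * n1 ≤ r' := by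
    calc x * n1 ≤ (n2 - 1) * n1 := Nat.mul_le_mul_right _ (by omega)
      _ ≤ n1 * n2 := by
          rw [Nat.mul_comm]
          exact Nat.mul_le_mul_left _ (by omega)
      _ ≤ r' := hr'
  have hmod : ((r' - x * n1 : ℕ) : ZMod n2) = 0 := by
    rw [Nat.cast_sub hxle]
    push_cast
    rw [hx, ZMod.natCast_val, ZMod.cast_id]
    rw [mul_assoc, ZMod.inv_mul_of_unit _ hu, mul_one]
    ring
  obtain ⟨b, hb⟩ := (ZMod.natCast_eq_zero_iff _ _).mp hmod
  exact ⟨x, b, by rw [Nat.mul_comm b n2]; omega⟩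

/-- Theorem 6 (De Santis–Spizzichino): if `P̃^{n₁} ⊴ P^{n₁}` and
`P̃^{n₂} ⊴ P^{n₂}` for two coprime positive integers `n₁, n₂`, then
`P̃^n ⊴ P^n` for every `n ≥ n̂(n₁,n₂)`. -/
theorem tri_pow_of_coprime
    (k : ℕ) (P Pt : Matrix (Fin (k + 1)) (Fin (k + 1)) ℝ)
    (hP : IsStochastic P) (hPt : IsStochastic Pt)
    (n1 n2 : ℕ) (hn1 : 0 < n1) (hn2 : 0 < n2) (hcop : Nat.Coprime n1 n2)
    (h1 : tri (Pt ^ n1) (P ^ n1)) (h2 : tri (Pt ^ n2) (P ^ n2)) :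
    ∀ n : ℕ, nhat n1 n2 ≤ n → tri (Pt ^ n) (P ^ n) := by
  have hmem : n1 * n2 ∈ { r : ℕ | ∀ r' : ℕ, r ≤ r' → ∃ a b : ℕ, r' = a * n1 + b * n2 } :=
    my_rep n1 n2 hn1 hn2 hcop
  have hinf := Nat.sInf_mem (⟨n1 * n2, hmem⟩ :
    { r : ℕ | ∀ r' : ℕ, r ≤ r' → ∃ a b : ℕ, r' = a * n1 + b * n2 }.Nonempty)
  intro n hn
  obtain ⟨a, b, rfl⟩ := hinf n hn
  rw [pow_add, pow_add, mul_comm a n1, mul_comm b n2, pow_mul, pow_mul, pow_mul, pow_mul]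
  exact my_tri_mul
    (my_isStochastic_pow (my_isStochastic_pow hPt n1) a)
    (my_isStochastic_pow (my_isStochastic_pow hP n1) a)
    (my_tri_pow (my_isStochastic_pow hPt n1) (my_isStochastic_pow hP n1) h1 a)
    (my_tri_pow (my_isStochastic_pow hPt n2) (my_isStochastic_pow hP n2) h2 b)
end

section
/- Let A' and A be stochastic matrices on E_k = {0,...,k}. Then A' ⊴ A holds if and only if there exists a stochastically monotone stochastic matrix B on E_k (i.e. b_{i,·} ⪯_st b_{j,·} for all i ≤ j) such that A' ⊴ B and B ⊴ A. -/
open Finset Matrix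

/-- tail sum indexed by ℕ -/
noncomputable def tailSum {m : ℕ} (μ : Fin m → ℝ) (j : ℕ) : ℝ :=
  ∑ l ∈ Finset.univ.filter (fun l : Fin m => j ≤ l.val), μ l

lemma tailSum_eq {m : ℕ} (μ : Fin m → ℝ) (j : Fin m) :
    ∑ l ∈ Finset.univ.filter (fun l => j ≤ l), μ l = tailSum μ j.val := by
  unfold tailSum
  apply Finset.sum_congr _ (fun _ _ => rfl)
  apply Finset.filter_congr
  intro x _
  exact Fin.le_def

lemma tailSum_zero {m : ℕ} (μ : Fin m → ℝ) : tailSum μ 0 = ∑ l, μ l := by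
  unfold tailSum
  rw [Finset.filter_true_of_mem (fun x _ => Nat.zero_le _)]

lemma tailSum_top {m : ℕ} (μ : Fin m → ℝ) : tailSum μ m = 0 := by
  unfold tailSum
  rw [Finset.sum_eq_zero_iff_of_nonneg]
  · intro x hx
    simp only [Finset.mem_filter] at hx
    exact absurd hx.2 (by omega)
  · intro x hx
    simp only [Finset.mem_filter] at hx
    exact absurd hx.2 (by omega)

lemma tailSum_anti {m : ℕ} (μ : Fin m → ℝ) (hμ : ∀ l, 0 ≤ μ l) (j : ℕ) :
    tailSum μ (j + 1) ≤ tailSum μ j := by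
  unfold tailSum
  apply Finset.sum_le_sum_of_subset_of_nonneg
  · intro x hx
    simp only [Finset.mem_filter] at hx ⊢
    exact ⟨hx.1, by omega⟩
  · intro x _ _
    exact hμ x

lemma tele_Ico (f : ℕ → ℝ) {a b : ℕ} (hab : a ≤ b) :
    ∑ l ∈ Finset.Ico a b, (f l - f (l + 1)) = f a - f b := by
  rw [Finset.sum_Ico_eq_sum_range]
  have := Finset.sum_range_sub' (fun i => f (a + i)) (b - a)
  rw [show (∑ i ∈ Finset.range (b - a), (f (a + i) - f (a + i + 1)))
      = ∑ i ∈ Finset.range (b - a), ((fun i => f (a + i)) i - (fun i => f (a + i)) (i + 1)) by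
    apply Finset.sum_congr rfl
    intro i _
    simp [Nat.add_assoc]]
  rw [this]
  simp [Nat.add_sub_cancel' hab]

lemma tailSum_of_diff {m : ℕ} (f : ℕ → ℝ) (j : Fin (m + 1)) :
    tailSum (fun l : Fin (m + 1) => f l.val - f (l.val + 1)) j.val = f j.val - f (m + 1) := by
  unfold tailSum
  rw [Finset.sum_filter, Fin.sum_univ_eq_sum_range (fun l => if j.val ≤ l then f l - f (l + 1) else 0)]
  rw [← Finset.sum_filter]
  rw [show Finset.filter (fun l => j.val ≤ l) (Finset.range (m + 1)) = Finset.Ico j.val (m + 1) by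
    ext x; simp [Finset.mem_Ico]; omega]
  exact tele_Ico f (by omega)

/-- Remark 2, second part (De Santis–Spizzichino): `A' ⊴ A` holds iff there is
a stochastically monotone stochastic matrix `B` with `A' ⊴ B ⊴ A`. -/
theorem tri_iff_exists_monotone_between
    (k : ℕ) (A' A : Matrix (Fin (k + 1)) (Fin (k + 1)) ℝ)
    (hA' : IsStochastic A') (hA : IsStochastic A) :
    tri A' A ↔
      ∃ B : Matrix (Fin (k + 1)) (Fin (k + 1)) ℝ,
        IsStochastic B ∧ (∀ i j : Fin (k + 1), i ≤ j → stDom (B i) (B j)) ∧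
        tri A' B ∧ tri B A := by
  constructor
  · intro h
    -- T i j = max over i' ≤ i of tail sums of A' i' at level j
    set T : Fin (k + 1) → ℕ → ℝ :=
      fun i j => (Finset.Iic i).sup' Finset.nonempty_Iic (fun i' => tailSum (A' i') j) with hT
    have hTanti : ∀ i j, T i (j + 1) ≤ T i j := by
      intro i j
      simp only [hT]
      apply Finset.sup'_le
      intro i' hi'
      exact le_trans (tailSum_anti _ (hA'.1 i') j) (Finset.le_sup' (fun i' => tailSum (A' i') j) hi')
    have hTzero : ∀ i, T i 0 = 1 := by
      intro i
      rw [hT]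
      simp only
      rw [show (fun i' => tailSum (A' i') 0) = fun _ : Fin (k+1) => (1:ℝ) by
        funext i'; rw [tailSum_zero]; exact hA'.2 i']
      apply Finset.sup'_const
    have hTtop : ∀ i, T i (k + 1) = 0 := by
      intro i
      rw [hT]
      simp only
      rw [show (fun i' => tailSum (A' i') (k+1)) = fun _ : Fin (k+1) => (0:ℝ) by
        funext i'; exact tailSum_top _]
      apply Finset.sup'_const
    refine ⟨fun i j => T i j.val - T i (j.val + 1), ⟨?_, ?_⟩, ?_, ?_, ?_⟩
    · intro i j
      simp only [sub_nonneg]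
      exact hTanti i j.val
    · intro i
      rw [Fin.sum_univ_eq_sum_range (fun j => T i j - T i (j + 1))]
      rw [show Finset.range (k + 1) = Finset.Ico 0 (k + 1) by simp]
      rw [tele_Ico (T i) (by omega), hTzero, hTtop]
      ring
    · -- B monotone
      intro i j hij x
      rw [tailSum_eq, tailSum_eq, tailSum_of_diff (T i), tailSum_of_diff (T j),
        hTtop, hTtop, sub_zero, sub_zero]
      simp only [hT]
      exact Finset.sup'_mono _ (Finset.Iic_subset_Iic.mpr hij) Finset.nonempty_Iic
    · -- tri A' B
      intro i j hij x
      rw [tailSum_eq, tailSum_eq, tailSum_of_diff (T j), hTtop, sub_zero]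
      simp only [hT]
      exact Finset.le_sup' (fun i' => tailSum (A' i') x.val) (Finset.mem_Iic.mpr hij)
    · -- tri B A
      intro i j hij x
      rw [tailSum_eq, tailSum_eq, tailSum_of_diff (T i), hTtop, sub_zero]
      simp only [hT]
      apply Finset.sup'_le
      intro i' hi'
      have := h i' j (le_trans (Finset.mem_Iic.mp hi') hij) x
      rw [tailSum_eq, tailSum_eq] at this
      exact this
  · rintro ⟨B, _, _, hAB, hBA⟩
    intro i j hij x
    exact le_trans (hAB i i le_rfl x) (hBA i j hij x)
end

section
/- Let A be a finite alphabet with N ≥ 1 letters, let a ∈ A, and let \underline{a} = aa...a ∈ A^k be the constant word of length k. Then for every word w ∈ A^k one has T_w ⪯_st T_{\underline{a}}; equivalently, for every t ∈ ℕ, the number of strings s ∈ A^t containing no occurrence of w is at most the number of strings s ∈ A^t containing no occurrence of \underline{a}. -/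
open Finset

/-- The word `w` (of length `k`) occurs in the string `s` (of length `t`):
some `k` consecutive symbols of `s` equal `w`. -/
def Occurs {A : Type*} {k t : ℕ} (w : Fin k → A) (s : Fin t → A) : Prop :=
  ∃ m : ℕ, ∃ hm : m + k ≤ t, ∀ j : Fin k,
    s ⟨m + (j : ℕ), by have := j.isLt; omega⟩ = w j

namespace ConstMaxAux

lemma fin_congr {A : Type} {t : ℕ} (s : Fin t → A) {v v' : ℕ} (h : v = v')
    (hv : v < t) (hv' : v' < t) : s ⟨v, hv⟩ = s ⟨v', hv'⟩ := by subst h; rfl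

lemma occurs_shift {A : Type} {k t m c : ℕ} (hc : c + m ≤ t) (v : Fin k → A) (s : Fin t → A)
    (h : Occurs v (fun p : Fin m => s ⟨c + p.1, by have := p.isLt; omega⟩)) : Occurs v s := by
  obtain ⟨m0, hm0, hocc⟩ := h
  refine ⟨c + m0, by omega, fun j => ?_⟩
  have h1 := hocc j
  have h2 : s ⟨c + m0 + (j : ℕ), by have := j.isLt; omega⟩
      = s ⟨c + (m0 + (j : ℕ)), by have := j.isLt; omega⟩ :=
    fin_congr s (by omega) _ _
  rw [h2]; exact h1

lemma exists_mism {A : Type} {k t : ℕ} (hkt : k ≤ t) (w : Fin k → A) (s : Fin t → A)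
    (hs : ¬ Occurs w s) : ∃ n, ∃ hn : n < k, s ⟨n, by omega⟩ ≠ w ⟨n, hn⟩ := by
  by_contra h
  push_neg at h
  refine hs ⟨0, by omega, fun j => ?_⟩
  have h1 := h j.1 j.isLt
  have h2 : s ⟨0 + (j : ℕ), by have := j.isLt; omega⟩ = s ⟨(j : ℕ), by have := j.isLt; omega⟩ :=
    fin_congr s (by omega) _ _
  rw [h2, h1]

open Classical in
noncomputable def fj {A : Type} {k t : ℕ} (hkt : k ≤ t) (w : Fin k → A) (s : Fin t → A)
    (hs : ¬ Occurs w s) : ℕ :=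
  Nat.find (exists_mism hkt w s hs)

lemma fj_lt {A : Type} {k t : ℕ} (hkt : k ≤ t) (w : Fin k → A) (s : Fin t → A)
    (hs : ¬ Occurs w s) : fj hkt w s hs < k := by
  classical
  exact (Nat.find_spec (exists_mism hkt w s hs)).choose

lemma fj_ne {A : Type} {k t : ℕ} (hkt : k ≤ t) (w : Fin k → A) (s : Fin t → A)
    (hs : ¬ Occurs w s) (h1 : fj hkt w s hs < t) (h2 : fj hkt w s hs < k) :
    s ⟨fj hkt w s hs, h1⟩ ≠ w ⟨fj hkt w s hs, h2⟩ := by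
  classical
  exact (Nat.find_spec (exists_mism hkt w s hs)).choose_spec

lemma fj_min {A : Type} {k t : ℕ} (hkt : k ≤ t) (w : Fin k → A) (s : Fin t → A)
    (hs : ¬ Occurs w s) {n : ℕ} (h : n < fj hkt w s hs) (hk' : n < k) (ht' : n < t) :
    s ⟨n, ht'⟩ = w ⟨n, hk'⟩ := by
  classical
  by_contra hne
  exact Nat.find_min (exists_mism hkt w s hs) h ⟨hk', hne⟩

variable {A : Type} [DecidableEq A] {k t : ℕ}

/-- The tail of `s` after position `fj`, as a `w`-avoiding string. -/
noncomputable def tailStr (hkt : k ≤ t) (w : Fin k → A) (s : Fin t → A) (hs : ¬ Occurs w s) :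
    {u : Fin (t - 1 - fj hkt w s hs) → A // ¬ Occurs w u} :=
  ⟨fun p => s ⟨fj hkt w s hs + 1 + p.1, by have := p.isLt; omega⟩,
   fun hocc => hs (occurs_shift (c := fj hkt w s hs + 1) (m := t - 1 - fj hkt w s hs) (by
      have := fj_lt hkt w s hs; omega) w s hocc)⟩

noncomputable def fwd (hkt : k ≤ t) (a : A) (w : Fin k → A)
    (e : ∀ m, m < t → ({u : Fin m → A // ¬ Occurs w u} ↪
        {u : Fin m → A // ¬ Occurs (fun _ : Fin k => a) u}))
    (s : Fin t → A) (hs : ¬ Occurs w s) : Fin t → A :=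
  fun i =>
    if hlt : i.1 < fj hkt w s hs then a
    else if heq : i.1 = fj hkt w s hs then
      Equiv.swap (w ⟨fj hkt w s hs, fj_lt hkt w s hs⟩) a
        (s ⟨fj hkt w s hs, by have := fj_lt hkt w s hs; omega⟩)
    else (e (t - 1 - fj hkt w s hs) (by have := fj_lt hkt w s hs; omega)
        (tailStr hkt w s hs)).1
      ⟨i.1 - fj hkt w s hs - 1, by have := i.isLt; omega⟩

lemma fwd_of_lt (hkt : k ≤ t) (a : A) (w : Fin k → A)
    (e : ∀ m, m < t → ({u : Fin m → A // ¬ Occurs w u} ↪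
        {u : Fin m → A // ¬ Occurs (fun _ : Fin k => a) u}))
    (s : Fin t → A) (hs : ¬ Occurs w s) (i : Fin t) (h : i.1 < fj hkt w s hs) :
    fwd hkt a w e s hs i = a := by
  simp only [fwd, dif_pos h]

lemma fwd_of_eq (hkt : k ≤ t) (a : A) (w : Fin k → A)
    (e : ∀ m, m < t → ({u : Fin m → A // ¬ Occurs w u} ↪
        {u : Fin m → A // ¬ Occurs (fun _ : Fin k => a) u}))
    (s : Fin t → A) (hs : ¬ Occurs w s) (i : Fin t) (h : i.1 = fj hkt w s hs) :
    fwd hkt a w e s hs i =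
      Equiv.swap (w ⟨fj hkt w s hs, fj_lt hkt w s hs⟩) a
        (s ⟨fj hkt w s hs, by have := fj_lt hkt w s hs; omega⟩) := by
  simp only [fwd, dif_neg (by omega : ¬ i.1 < fj hkt w s hs), dif_pos h]

lemma fwd_of_gt (hkt : k ≤ t) (a : A) (w : Fin k → A)
    (e : ∀ m, m < t → ({u : Fin m → A // ¬ Occurs w u} ↪
        {u : Fin m → A // ¬ Occurs (fun _ : Fin k => a) u}))
    (s : Fin t → A) (hs : ¬ Occurs w s) (i : Fin t) (h : fj hkt w s hs < i.1) :
    fwd hkt a w e s hs i =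
      (e (t - 1 - fj hkt w s hs) (by have := fj_lt hkt w s hs; omega)
        (tailStr hkt w s hs)).1
      ⟨i.1 - fj hkt w s hs - 1, by have := i.isLt; omega⟩ := by
  simp only [fwd, dif_neg (by omega : ¬ i.1 < fj hkt w s hs),
    dif_neg (by omega : ¬ i.1 = fj hkt w s hs)]

lemma tailStr_val (hkt : k ≤ t) (w : Fin k → A) (s : Fin t → A) (hs : ¬ Occurs w s)
    (p : Fin (t - 1 - fj hkt w s hs)) :
    (tailStr hkt w s hs).1 p = s ⟨fj hkt w s hs + 1 + p.1, by have := p.isLt; omega⟩ := rfl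

attribute [irreducible] fj tailStr fwd

lemma fwd_at_j_ne (hkt : k ≤ t) (a : A) (w : Fin k → A)
    (e : ∀ m, m < t → ({u : Fin m → A // ¬ Occurs w u} ↪
        {u : Fin m → A // ¬ Occurs (fun _ : Fin k => a) u}))
    (s : Fin t → A) (hs : ¬ Occurs w s) (i : Fin t) (h : i.1 = fj hkt w s hs) :
    fwd hkt a w e s hs i ≠ a := by
  rw [fwd_of_eq hkt a w e s hs i h]
  intro hcontra
  have hswap : Equiv.swap (w ⟨fj hkt w s hs, fj_lt hkt w s hs⟩) a
      (w ⟨fj hkt w s hs, fj_lt hkt w s hs⟩) = a := Equiv.swap_apply_left _ _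
  have h2 := (Equiv.swap (w ⟨fj hkt w s hs, fj_lt hkt w s hs⟩) a).injective
    (hcontra.trans hswap.symm)
  exact fj_ne hkt w s hs _ _ h2

lemma fwd_avoid (hkt : k ≤ t) (a : A) (w : Fin k → A)
    (e : ∀ m, m < t → ({u : Fin m → A // ¬ Occurs w u} ↪
        {u : Fin m → A // ¬ Occurs (fun _ : Fin k => a) u}))
    (s : Fin t → A) (hs : ¬ Occurs w s) :
    ¬ Occurs (fun _ : Fin k => a) (fwd hkt a w e s hs) := by
  rintro ⟨m, hm, hocc⟩
  have hjk : fj hkt w s hs < k := fj_lt hkt w s hs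
  by_cases hcase : m ≤ fj hkt w s hs
  · have h1 := hocc ⟨fj hkt w s hs - m, by omega⟩
    exact fwd_at_j_ne hkt a w e s hs ⟨m + (fj hkt w s hs - m), by omega⟩ (by simp; omega) h1
  · push_neg at hcase
    have htail := (e (t - 1 - fj hkt w s hs) (by omega) (tailStr hkt w s hs)).2
    refine htail ⟨m - fj hkt w s hs - 1, by omega, fun p => ?_⟩
    have h1 := hocc p
    have h2 := fwd_of_gt hkt a w e s hs ⟨m + p.1, by have := p.isLt; omega⟩
      (by simp; omega)
    rw [h2] at h1
    have h3 : ((e (t - 1 - fj hkt w s hs) (by omega) (tailStr hkt w s hs)).1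
        ⟨m - fj hkt w s hs - 1 + p.1, by have := p.isLt; omega⟩ : A)
        = (e (t - 1 - fj hkt w s hs) (by omega) (tailStr hkt w s hs)).1
        ⟨m + p.1 - fj hkt w s hs - 1, by have := p.isLt; omega⟩ :=
      fin_congr _ (by omega) _ _
    rw [h3]
    exact h1

lemma fwd_fj_eq (hkt : k ≤ t) (a : A) (w : Fin k → A)
    (e : ∀ m, m < t → ({u : Fin m → A // ¬ Occurs w u} ↪
        {u : Fin m → A // ¬ Occurs (fun _ : Fin k => a) u}))
    (s s' : Fin t → A) (hs : ¬ Occurs w s) (hs' : ¬ Occurs w s')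
    (heq : fwd hkt a w e s hs = fwd hkt a w e s' hs') :
    fj hkt w s hs = fj hkt w s' hs' := by
  by_contra hne
  rcases Nat.lt_or_ge (fj hkt w s hs) (fj hkt w s' hs') with h | h
  · have hjt : fj hkt w s hs < t := by have := fj_lt hkt w s hs; omega
    have h1 : fwd hkt a w e s' hs' ⟨fj hkt w s hs, hjt⟩ = a :=
      fwd_of_lt hkt a w e s' hs' _ h
    have h2 : fwd hkt a w e s hs ⟨fj hkt w s hs, hjt⟩ ≠ a :=
      fwd_at_j_ne hkt a w e s hs _ rfl
    rw [heq] at h2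
    exact h2 h1
  · have h' : fj hkt w s' hs' < fj hkt w s hs := by omega
    have hjt : fj hkt w s' hs' < t := by have := fj_lt hkt w s' hs'; omega
    have h1 : fwd hkt a w e s hs ⟨fj hkt w s' hs', hjt⟩ = a :=
      fwd_of_lt hkt a w e s hs _ h'
    have h2 : fwd hkt a w e s' hs' ⟨fj hkt w s' hs', hjt⟩ ≠ a :=
      fwd_at_j_ne hkt a w e s' hs' _ rfl
    rw [← heq] at h2
    exact h2 h1

lemma e_inj_eval (a : A) (w : Fin k → A) {t : ℕ}
    (e : ∀ m, m < t → ({u : Fin m → A // ¬ Occurs w u} ↪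
        {u : Fin m → A // ¬ Occurs (fun _ : Fin k => a) u}))
    {M M' : ℕ} (h : M = M') (hM : M < t) (hM' : M' < t)
    (u : {u : Fin M → A // ¬ Occurs w u}) (u' : {u : Fin M' → A // ¬ Occurs w u})
    (hval : ∀ (i : ℕ) (hi : i < M), ((e M hM u).1 ⟨i, hi⟩ : A) = (e M' hM' u').1 ⟨i, by omega⟩)
    (i : ℕ) (hi : i < M) : u.1 ⟨i, hi⟩ = u'.1 ⟨i, by omega⟩ := by
  subst h
  have huu : u = u' := by
    apply (e M hM).injective
    apply Subtype.ext
    funext q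
    have h2 := hval q.1 q.isLt
    simpa using h2
  rw [huu]

set_option maxHeartbeats 1000000 in
lemma fwd_inj (hkt : k ≤ t) (a : A) (w : Fin k → A)
    (e : ∀ m, m < t → ({u : Fin m → A // ¬ Occurs w u} ↪
        {u : Fin m → A // ¬ Occurs (fun _ : Fin k => a) u}))
    (s s' : Fin t → A) (hs : ¬ Occurs w s) (hs' : ¬ Occurs w s')
    (heq : fwd hkt a w e s hs = fwd hkt a w e s' hs') : s = s' := by
  have hjj : fj hkt w s hs = fj hkt w s' hs' := fwd_fj_eq hkt a w e s s' hs hs' heq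
  have hjk : fj hkt w s hs < k := fj_lt hkt w s hs
  have hjk' : fj hkt w s' hs' < k := fj_lt hkt w s' hs'
  -- values of the mapped tails agree
  have hval : ∀ (i : ℕ) (hi : i < t - 1 - fj hkt w s hs),
      ((e (t - 1 - fj hkt w s hs) (by omega) (tailStr hkt w s hs)).1 ⟨i, hi⟩ : A)
        = (e (t - 1 - fj hkt w s' hs') (by omega) (tailStr hkt w s' hs')).1
            ⟨i, by omega⟩ := by
    intro i hi
    have hgt : fj hkt w s hs < fj hkt w s hs + 1 + i := by omega
    have h1 := fwd_of_gt hkt a w e s hs ⟨fj hkt w s hs + 1 + i, by omega⟩ hgt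
    have h1' := fwd_of_gt hkt a w e s' hs' ⟨fj hkt w s hs + 1 + i, by omega⟩ (by
      simp only []; omega)
    rw [heq, h1'] at h1
    have e2 : ((e (t - 1 - fj hkt w s hs) (by omega) (tailStr hkt w s hs)).1
        ⟨fj hkt w s hs + 1 + i - fj hkt w s hs - 1, by omega⟩ : A)
        = (e (t - 1 - fj hkt w s hs) (by omega) (tailStr hkt w s hs)).1 ⟨i, hi⟩ :=
      fin_congr _ (by omega) _ _
    have e3 : ((e (t - 1 - fj hkt w s' hs') (by omega) (tailStr hkt w s' hs')).1
        ⟨fj hkt w s hs + 1 + i - fj hkt w s' hs' - 1, by omega⟩ : A)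
        = (e (t - 1 - fj hkt w s' hs') (by omega) (tailStr hkt w s' hs')).1
            ⟨i, by omega⟩ :=
      fin_congr _ (by omega) _ _
    rw [e2, e3] at h1
    exact h1.symm
  have htail := e_inj_eval a w e (by omega : t - 1 - fj hkt w s hs = t - 1 - fj hkt w s' hs')
    (by omega) (by omega) (tailStr hkt w s hs) (tailStr hkt w s' hs') hval
  funext i
  rcases Nat.lt_trichotomy i.1 (fj hkt w s hs) with hlt | heqi | hgt
  · have q1 : s ⟨i.1, i.isLt⟩ = w ⟨i.1, by omega⟩ := fj_min hkt w s hs hlt (by omega) i.isLt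
    have q2 : s' ⟨i.1, i.isLt⟩ = w ⟨i.1, by omega⟩ := fj_min hkt w s' hs' (by omega) (by omega) i.isLt
    have : s ⟨i.1, i.isLt⟩ = s' ⟨i.1, i.isLt⟩ := q1.trans q2.symm
    simpa using this
  · -- at the mismatch position
    have h1 := fwd_of_eq hkt a w e s hs i heqi
    have h1' := fwd_of_eq hkt a w e s' hs' i (by omega)
    rw [heq, h1'] at h1
    have hw : w ⟨fj hkt w s' hs', fj_lt hkt w s' hs'⟩ = w ⟨fj hkt w s hs, fj_lt hkt w s hs⟩ :=
      fin_congr w (by omega) _ _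
    rw [hw] at h1
    have h2 := (Equiv.swap (w ⟨fj hkt w s hs, fj_lt hkt w s hs⟩) a).injective h1.symm
    have e1 : s i = s ⟨fj hkt w s hs, by omega⟩ := fin_congr s (by omega) _ _
    have e2 : s' i = s' ⟨fj hkt w s' hs', by omega⟩ := fin_congr s' (by omega) _ _
    rw [e1, e2]
    exact h2
  · -- in the tail
    have ht1 := htail (i.1 - fj hkt w s hs - 1) (by have := i.isLt; omega)
    -- tailStr values are s, s' values
    have e1 : (tailStr hkt w s hs).1 ⟨i.1 - fj hkt w s hs - 1, by have := i.isLt; omega⟩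
        = s i := by
      rw [tailStr_val]
      exact fin_congr s (by simp only [Fin.val_mk]; have := i.isLt; omega) _ _
    have e2 : (tailStr hkt w s' hs').1 ⟨i.1 - fj hkt w s hs - 1, by have := i.isLt; omega⟩
        = s' i := by
      rw [tailStr_val]
      exact fin_congr s' (by simp only [Fin.val_mk]; have := i.isLt; omega) _ _
    rw [e1, e2] at ht1
    exact ht1

end ConstMaxAux

open ConstMaxAux in
lemma key_embedding {A : Type} [DecidableEq A] {k : ℕ} (hk : 0 < k) (a : A) (w : Fin k → A) :
    ∀ t : ℕ, Nonempty ({s : Fin t → A // ¬ Occurs w s} ↪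
      {s : Fin t → A // ¬ Occurs (fun _ : Fin k => a) s}) := by
  intro t
  induction t using Nat.strong_induction_on with
  | _ t IH =>
    by_cases hkt : k ≤ t
    · have e : ∀ m, m < t → ({u : Fin m → A // ¬ Occurs w u} ↪
          {u : Fin m → A // ¬ Occurs (fun _ : Fin k => a) u}) := fun m hm => (IH m hm).some
      refine ⟨⟨fun s => ⟨fwd hkt a w e s.1 s.2, fwd_avoid hkt a w e s.1 s.2⟩, ?_⟩⟩
      intro s s' h
      have h2 : fwd hkt a w e s.1 s.2 = fwd hkt a w e s'.1 s'.2 := congrArg Subtype.val h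
      exact Subtype.ext (fwd_inj hkt a w e s.1 s'.1 s.2 s'.2 h2)
    · push_neg at hkt
      exact ⟨(Equiv.subtypeEquivRight (fun s => iff_of_true
        (fun h => by obtain ⟨m, hm, _⟩ := h; omega)
        (fun h => by obtain ⟨m, hm, _⟩ := h; omega))).toEmbedding⟩

/-- Proposition 2 (De Santis–Spizzichino): the constant word `aa…a` is a
stochastic maximum: `T_w ⪯_st T_{\underline a}` for every word `w` of the same
length, i.e. for every `t` there are at least as many strings of length `t`
avoiding the constant word as strings avoiding `w`. -/
theorem constant_word_is_st_maximal
    (N k : ℕ) (A : Type) [Fintype A] (hcard : Fintype.card A = N) (hN : 1 ≤ N)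
    (a : A) (w : Fin k → A) :
    ∀ t : ℕ,
      Nat.card {s : Fin t → A // ¬ Occurs w s} ≤
        Nat.card {s : Fin t → A // ¬ Occurs (fun _ : Fin k => a) s} := by
  intro t
  classical
  rcases Nat.eq_zero_or_pos k with hk0 | hk
  · subst hk0
    have hall : ∀ s : Fin t → A, Occurs w s := fun s => ⟨0, by omega, fun j => j.elim0⟩
    haveI : IsEmpty {s : Fin t → A // ¬ Occurs w s} := ⟨fun s => s.2 (hall s.1)⟩
    rw [Nat.card_of_isEmpty]
    exact Nat.zero_le _
  · obtain ⟨emb⟩ := key_embedding hk a w t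
    exact Nat.card_le_card_of_injective emb emb.injective
end
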